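/- Let X_1, X_2, … be a sequence of real-valued random variables, and suppose there are constants A > 0, a > 0, b ≥ 0 and γ ∈ (0,2) such that for all integers m ≥ 0, n ≥ 1 and all reals t ≥ 0, P{S(m+1, m+n) > t} ≤ A·exp(−a t² / (n + b t^γ)). Then for every 0 < c < a there exists a constant C > 0 (depending only on A, a, b, γ and c) such that for all integers n ≥ 1, m ≥ 0 and all reals t ≥ 0, P{M⁺(m+1, m+n) > t} ≤ C·exp(−c t² / (n + b t^γ)), where M⁺(m+1, m+n) = max_{m+1 ≤ j ≤ m+n} (S(m+1, j) ∨ 0). -/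

import Mathlib

open MeasureTheory Finset

private lemma exp_le_third {u v : ℝ} (h : u + Real.log 3 ≤ v) :
    Real.exp u ≤ 1 / 3 * Real.exp v := by
  have h3 : Real.exp (v - Real.log 3) = 1 / 3 * Real.exp v := by
    rw [Real.exp_sub, Real.exp_log (by norm_num : (0:ℝ) < 3)]; ring
  have h2 : Real.exp u ≤ Real.exp (v - Real.log 3) :=
    Real.exp_le_exp.mpr (by linarith)
  linarith

private lemma rpow_le_const_mul_exp {x p q : ℝ} (hx : 0 ≤ x) (hp : 0 < p) (hq : 0 < q) :
    x ^ p ≤ (p / q) ^ p * Real.exp (q * x) := by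
  have hpq : (0:ℝ) ≤ p / q := by positivity
  have h1 : x ≤ p / q * Real.exp (q * x / p) := by
    have hy := Real.add_one_le_exp (q * x / p)
    have h2 : q * x / p ≤ Real.exp (q * x / p) := by linarith
    calc x = p / q * (q * x / p) := by field_simp
      _ ≤ p / q * Real.exp (q * x / p) := mul_le_mul_of_nonneg_left h2 hpq
  calc x ^ p ≤ (p / q * Real.exp (q * x / p)) ^ p := Real.rpow_le_rpow hx h1 hp.le
    _ = (p / q) ^ p * (Real.exp (q * x / p)) ^ p :=
        Real.mul_rpow hpq (Real.exp_nonneg _)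
    _ = (p / q) ^ p * Real.exp (q * x) := by
        rw [Real.rpow_def_of_pos (Real.exp_pos _), Real.log_exp,
          div_mul_cancel₀ _ hp.ne']

set_option maxHeartbeats 2000000 in
/-- **One-sided maximal Bernstein inequality** (Kevei–Mason, Remark 5).
If the partial sums `S(m+1, m+n) = ∑_{i=m+1}^{m+n} X i` of a sequence of real random
variables satisfy a one-sided generalized Bernstein-type inequality
`P{S(m+1, m+n) > t} ≤ A · exp(−a t² / (n + b t^γ))`,
then for every `0 < c < a` there is a constant `C > 0` such that
`M⁺(m+1, m+n) = max_{m+1 ≤ j ≤ m+n} (S(m+1, j) ∨ 0)` satisfies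
`P{M⁺(m+1, m+n) > t} ≤ C · exp(−c t² / (n + b t^γ))`. -/
theorem maximal_bernstein_one_sided
    {Ω : Type*} [MeasurableSpace Ω] (P : Measure Ω) [IsProbabilityMeasure P]
    (X : ℕ → Ω → ℝ) (A a b γ : ℝ)
    (hA : 0 < A) (ha : 0 < a) (hb : 0 ≤ b) (hγ : γ ∈ Set.Ioo (0 : ℝ) 2)
    (hBern : ∀ (m n : ℕ), 1 ≤ n → ∀ t : ℝ, 0 ≤ t →
      P {ω | t < ∑ i ∈ Finset.Icc (m + 1) (m + n), X i ω}
        ≤ ENNReal.ofReal (A * Real.exp (-(a * t ^ 2) / (n + b * t ^ γ)))) :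
    ∀ c : ℝ, 0 < c → c < a → ∃ C : ℝ, 0 < C ∧
      ∀ (m n : ℕ) (hn : 1 ≤ n), ∀ t : ℝ, 0 ≤ t →
        P {ω | t < (Finset.Icc (m + 1) (m + n)).sup'
              (Finset.nonempty_Icc.mpr (by omega))
              (fun j => (∑ i ∈ Finset.Icc (m + 1) j, X i ω) ⊔ 0)}
          ≤ ENNReal.ofReal (C * Real.exp (-(c * t ^ 2) / (n + b * t ^ γ))) := by
  obtain ⟨hγ0, hγ2⟩ := hγ
  intro c hc hca
  -- auxiliary constants
  obtain ⟨c', hc'def⟩ : ∃ zzz : ℝ, zzz = (a + c) / 2 := ⟨_, rfl⟩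
  have hc'1 : c < c' := by rw [hc'def]; linarith
  have hc'2 : c' < a := by rw [hc'def]; linarith
  have hc'0 : 0 < c' := by linarith
  obtain ⟨θ, hθdef⟩ : ∃ zzz : ℝ, zzz = Real.sqrt (c' / a) := ⟨_, rfl⟩
  have hθ0 : 0 < θ := by rw [hθdef]; exact Real.sqrt_pos.mpr (by positivity)
  have hθsq : a * θ ^ 2 = c' := by
    rw [hθdef, Real.sq_sqrt (by positivity : (0:ℝ) ≤ c' / a)]
    field_simp
  have hθ1 : θ < 1 := by
    have hsq1 : θ ^ 2 < 1 := by nlinarith [hθsq, hc'2, ha]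
    nlinarith [hsq1, hθ0]
  obtain ⟨ε, hεdef⟩ : ∃ zzz : ℝ, zzz = (1 - θ) ^ 2 / 4 := ⟨_, rfl⟩
  have hε0 : 0 < ε := by
    rw [hεdef]
    have : (0:ℝ) < (1 - θ) ^ 2 := pow_pos (by linarith) 2
    linarith
  have hε14 : ε ≤ 1 / 4 := by
    rw [hεdef]; nlinarith [hθ0, hθ1]
  have hlog3 : 0 < Real.log 3 := Real.log_pos (by norm_num)
  obtain ⟨K, hKdef⟩ : ∃ zzz : ℝ, zzz = max (4 * Real.log 3 / (c * ε)) (Real.log 3 / c) := ⟨_, rfl⟩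
  have hK0 : 0 < K := by
    rw [hKdef]
    exact lt_of_lt_of_le (by positivity) (le_max_right _ _)
  have hK1 : Real.log 3 ≤ c * ε / 4 * K := by
    have h1 : 4 * Real.log 3 / (c * ε) ≤ K := by rw [hKdef]; exact le_max_left _ _
    have h2 : c * ε / 4 * (4 * Real.log 3 / (c * ε)) = Real.log 3 := by
      field_simp
    nlinarith [mul_le_mul_of_nonneg_left h1 (show (0:ℝ) ≤ c * ε / 4 by positivity)]
  have hK2 : Real.log 3 ≤ c * K := by
    have h1 : Real.log 3 / c ≤ K := by rw [hKdef]; exact le_max_right _ _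
    calc Real.log 3 = c * (Real.log 3 / c) := by field_simp
      _ ≤ c * K := mul_le_mul_of_nonneg_left h1 hc.le
  obtain ⟨N₀, hN₀def⟩ : ∃ zzz : ℕ, zzz = ⌈(2:ℝ) / ε⌉₊ := ⟨_, rfl⟩
  obtain ⟨p, hpdef⟩ : ∃ zzz : ℝ, zzz = γ / (2 - γ) := ⟨_, rfl⟩
  have hp0 : 0 < p := by rw [hpdef]; exact div_pos hγ0 (by linarith)
  obtain ⟨q, hqdef⟩ : ∃ zzz : ℝ, zzz = (a - c) * ε / ((1 + ε) * b) := ⟨_, rfl⟩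
  obtain ⟨C₂, hC₂def⟩ : ∃ zzz : ℝ, zzz = A * b / ε * (p / q) ^ p := ⟨_, rfl⟩
  obtain ⟨C, hCdef⟩ : ∃ zzz : ℝ, zzz = max (max (3 * A) ((N₀ : ℝ) * A)) (max (Real.exp (c * K)) C₂) := ⟨_, rfl⟩
  have hC3A : 3 * A ≤ C := by rw [hCdef]; exact le_trans (le_max_left _ _) (le_max_left _ _)
  have hCN : (N₀ : ℝ) * A ≤ C := by rw [hCdef]; exact le_trans (le_max_right _ _) (le_max_left _ _)
  have hCK : Real.exp (c * K) ≤ C := by rw [hCdef]; exact le_trans (le_max_left _ _) (le_max_right _ _)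
  have hCC₂ : C₂ ≤ C := by rw [hCdef]; exact le_trans (le_max_right _ _) (le_max_right _ _)
  have hC0 : 0 < C := lt_of_lt_of_le (by positivity) hC3A
  refine ⟨C, hC0, ?_⟩
  -- the crude union bound
  have UB : ∀ (m n : ℕ), ∀ _hn : 1 ≤ n, ∀ t : ℝ, 0 ≤ t →
      P {ω | t < (Finset.Icc (m + 1) (m + n)).sup'
            (Finset.nonempty_Icc.mpr (by omega))
            (fun j => (∑ i ∈ Finset.Icc (m + 1) j, X i ω) ⊔ 0)}
        ≤ ENNReal.ofReal ((n : ℝ) * (A * Real.exp (-(a * t ^ 2) / (n + b * t ^ γ)))) := by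
    intro m n hn t ht
    have hD0 : (0:ℝ) ≤ b * t ^ γ := mul_nonneg hb (Real.rpow_nonneg ht γ)
    have hn1 : (1:ℝ) ≤ (n : ℝ) := by exact_mod_cast hn
    have hden : (0:ℝ) < (n : ℝ) + b * t ^ γ := by linarith
    have hsub : {ω | t < (Finset.Icc (m + 1) (m + n)).sup'
            (Finset.nonempty_Icc.mpr (by omega))
            (fun j => (∑ i ∈ Finset.Icc (m + 1) j, X i ω) ⊔ 0)} ⊆
        ⋃ j ∈ Finset.Icc (m + 1) (m + n), {ω | t < ∑ i ∈ Finset.Icc (m + 1) j, X i ω} := by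
      intro ω hω
      simp only [Set.mem_setOf_eq] at hω
      rw [Finset.lt_sup'_iff] at hω
      obtain ⟨j, hj, hjt⟩ := hω
      have hjt' : t < ∑ i ∈ Finset.Icc (m + 1) j, X i ω := by
        rcases lt_sup_iff.mp hjt with h' | h'
        · exact h'
        · linarith
      exact Set.mem_biUnion hj hjt'
    refine le_trans (measure_mono hsub) (le_trans (measure_biUnion_finset_le _ _) ?_)
    have hstep : ∀ j ∈ Finset.Icc (m + 1) (m + n),
        P {ω | t < ∑ i ∈ Finset.Icc (m + 1) j, X i ω}
          ≤ ENNReal.ofReal (A * Real.exp (-(a * t ^ 2) / (n + b * t ^ γ))) := by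
      intro j hj
      rw [Finset.mem_Icc] at hj
      have hk : 1 ≤ j - m := by omega
      have hjm : m + (j - m) = j := by omega
      have hB := hBern m (j - m) hk t ht
      rw [hjm] at hB
      refine le_trans hB (ENNReal.ofReal_le_ofReal ?_)
      have hk1 : (1:ℝ) ≤ ((j - m : ℕ) : ℝ) := by exact_mod_cast hk
      have hdenj : (0:ℝ) < ((j - m : ℕ) : ℝ) + b * t ^ γ := by linarith
      have hjn : ((j - m : ℕ) : ℝ) ≤ (n : ℝ) := by
        exact_mod_cast (show j - m ≤ n by omega)
      have hmono : (a * t ^ 2) / ((n : ℝ) + b * t ^ γ)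
          ≤ (a * t ^ 2) / (((j - m : ℕ) : ℝ) + b * t ^ γ) := by
        exact div_le_div_of_nonneg_left (by positivity) hdenj (by linarith)
      have hexp : Real.exp (-(a * t ^ 2) / (((j - m : ℕ) : ℝ) + b * t ^ γ))
          ≤ Real.exp (-(a * t ^ 2) / ((n : ℝ) + b * t ^ γ)) := by
        apply Real.exp_le_exp.mpr
        rw [neg_div, neg_div]
        exact neg_le_neg hmono
      exact mul_le_mul_of_nonneg_left hexp hA.le
    calc ∑ j ∈ Finset.Icc (m + 1) (m + n), P {ω | t < ∑ i ∈ Finset.Icc (m + 1) j, X i ω}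
        ≤ ∑ _j ∈ Finset.Icc (m + 1) (m + n),
            ENNReal.ofReal (A * Real.exp (-(a * t ^ 2) / (n + b * t ^ γ))) :=
          Finset.sum_le_sum hstep
      _ = ENNReal.ofReal ((n : ℝ) * (A * Real.exp (-(a * t ^ 2) / (n + b * t ^ γ)))) := by
          rw [Finset.sum_const, Nat.card_Icc, show m + n + 1 - (m + 1) = n from by omega,
            nsmul_eq_mul, ← ENNReal.ofReal_natCast n,
            ← ENNReal.ofReal_mul (by positivity : (0:ℝ) ≤ (n:ℝ))]
  have main : ∀ n : ℕ, ∀ m : ℕ, ∀ _hn : 1 ≤ n, ∀ t : ℝ, 0 ≤ t →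
      P {ω | t < (Finset.Icc (m + 1) (m + n)).sup'
            (Finset.nonempty_Icc.mpr (by omega))
            (fun j => (∑ i ∈ Finset.Icc (m + 1) j, X i ω) ⊔ 0)}
        ≤ ENNReal.ofReal (C * Real.exp (-(c * t ^ 2) / (n + b * t ^ γ))) := by
    intro n
    induction n using Nat.strong_induction_on with
    | _ n IH =>
      intro m hn t ht
      have hD0 : (0:ℝ) ≤ b * t ^ γ := mul_nonneg hb (Real.rpow_nonneg ht γ)
      have hn1 : (1:ℝ) ≤ (n : ℝ) := by exact_mod_cast hn
      have hden : (0:ℝ) < (n : ℝ) + b * t ^ γ := by linarith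
      have hexpcc : Real.exp (-(a * t ^ 2) / ((n : ℝ) + b * t ^ γ))
          ≤ Real.exp (-(c * t ^ 2) / ((n : ℝ) + b * t ^ γ)) := by
        apply Real.exp_le_exp.mpr
        have hle : c * t ^ 2 ≤ a * t ^ 2 := mul_le_mul_of_nonneg_right hca.le (sq_nonneg t)
        exact (div_le_div_iff_of_pos_right hden).mpr (neg_le_neg hle)
      -- Case 1 : small n, union bound
      by_cases hnN : n ≤ N₀
      · refine le_trans (UB m n hn t ht) (ENNReal.ofReal_le_ofReal ?_)
        have hnA : (n : ℝ) * A ≤ C := by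
          refine le_trans ?_ hCN
          exact mul_le_mul_of_nonneg_right (by exact_mod_cast hnN) hA.le
        calc (n : ℝ) * (A * Real.exp (-(a * t ^ 2) / ((n : ℝ) + b * t ^ γ)))
            = ((n : ℝ) * A) * Real.exp (-(a * t ^ 2) / ((n : ℝ) + b * t ^ γ)) := by ring
          _ ≤ C * Real.exp (-(c * t ^ 2) / ((n : ℝ) + b * t ^ γ)) :=
              mul_le_mul hnA hexpcc (Real.exp_nonneg _) hC0.le
      push_neg at hnN
      -- Case 2 : small relative t, trivial bound
      by_cases hTK : t ^ 2 / ((n : ℝ) + b * t ^ γ) < K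
      · refine le_trans prob_le_one (ENNReal.one_le_ofReal.mpr ?_)
        have h1 : Real.exp ((c * t ^ 2) / ((n : ℝ) + b * t ^ γ)) *
            Real.exp (-(c * t ^ 2) / ((n : ℝ) + b * t ^ γ)) = 1 := by
          rw [← Real.exp_add, neg_div, add_neg_cancel, Real.exp_zero]
        have h2 : Real.exp ((c * t ^ 2) / ((n : ℝ) + b * t ^ γ)) ≤ C := by
          refine le_trans ?_ hCK
          apply Real.exp_le_exp.mpr
          rw [mul_div_assoc]
          exact mul_le_mul_of_nonneg_left hTK.le hc.le
        calc (1:ℝ) = Real.exp ((c * t ^ 2) / ((n : ℝ) + b * t ^ γ)) *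
              Real.exp (-(c * t ^ 2) / ((n : ℝ) + b * t ^ γ)) := h1.symm
          _ ≤ C * Real.exp (-(c * t ^ 2) / ((n : ℝ) + b * t ^ γ)) :=
              mul_le_mul_of_nonneg_right h2 (Real.exp_nonneg _)
      push_neg at hTK
      -- Case 3 : b * t ^ γ large, union bound with subgaussian slack
      by_cases hbt : ε * (n : ℝ) < b * t ^ γ
      · have ht0 : 0 < t := by
          rcases eq_or_lt_of_le ht with h' | h'
          · exfalso
            rw [← h', Real.zero_rpow hγ0.ne', mul_zero] at hbt
            nlinarith [hε0, hn1]
          · exact h'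
        have hb0 : 0 < b := by
          rcases eq_or_lt_of_le hb with h' | h'
          · exfalso
            rw [← h', zero_mul] at hbt
            nlinarith [hε0, hn1]
          · exact h'
        have hq0 : 0 < q := by
          rw [hqdef]
          exact div_pos (mul_pos (by linarith) hε0) (mul_pos (by linarith) hb0)
        obtain ⟨x, hxdef⟩ : ∃ zzz : ℝ, zzz = t ^ (2 - γ) := ⟨_, rfl⟩
        have hx0 : 0 < x := by rw [hxdef]; exact Real.rpow_pos_of_pos ht0 _
        have htγx : t ^ γ = x ^ p := by
          rw [hxdef, ← Real.rpow_mul ht]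
          congr 1
          rw [hpdef]
          have hne : (2:ℝ) - γ ≠ 0 := sub_ne_zero.mpr (by linarith)
          field_simp
        have ht2 : x * t ^ γ = t ^ 2 := by
          rw [hxdef, ← Real.rpow_add ht0,
            show (2:ℝ) - γ + γ = ((2:ℕ):ℝ) by push_cast; ring, Real.rpow_natCast]
        refine le_trans (UB m n hn t ht) (ENNReal.ofReal_le_ofReal ?_)
        have hsplit : Real.exp (-(a * t ^ 2) / ((n : ℝ) + b * t ^ γ)) =
            Real.exp (-((a - c) * t ^ 2) / ((n : ℝ) + b * t ^ γ)) *
              Real.exp (-(c * t ^ 2) / ((n : ℝ) + b * t ^ γ)) := by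
          rw [← Real.exp_add]
          congr 1
          field_simp
          ring
        have hnD : (n : ℝ) < b * t ^ γ / ε := (lt_div_iff₀ hε0).mpr (by linarith)
        have hkey : (n : ℝ) * A * Real.exp (-((a - c) * t ^ 2) / ((n : ℝ) + b * t ^ γ)) ≤ C := by
          have hq_le : q * x ≤ ((a - c) * t ^ 2) / ((n : ℝ) + b * t ^ γ) := by
            rw [le_div_iff₀ hden]
            have hnD2 : (n : ℝ) + b * t ^ γ ≤ b * t ^ γ * (1 + ε) / ε := by
              have he : b * t ^ γ / ε + b * t ^ γ = b * t ^ γ * (1 + ε) / ε := by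
                field_simp
              linarith
            have hqx0 : (0:ℝ) ≤ q * x := by positivity
            calc q * x * ((n : ℝ) + b * t ^ γ)
                ≤ q * x * (b * t ^ γ * (1 + ε) / ε) := mul_le_mul_of_nonneg_left hnD2 hqx0
              _ = (a - c) * (x * t ^ γ) := by
                  rw [hqdef]
                  field_simp
              _ = (a - c) * t ^ 2 := by rw [ht2]
          have hexp1 : Real.exp (-((a - c) * t ^ 2) / ((n : ℝ) + b * t ^ γ))
              ≤ Real.exp (-(q * x)) := by
            apply Real.exp_le_exp.mpr
            rw [neg_div]
            linarith
          have hnA2 : (n : ℝ) * A ≤ A * b / ε * x ^ p := by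
            have h11 : (n : ℝ) ≤ b / ε * x ^ p := by
              rw [← htγx]
              calc (n : ℝ) ≤ b * t ^ γ / ε := hnD.le
                _ = b / ε * t ^ γ := by ring
            calc (n : ℝ) * A = A * (n : ℝ) := by ring
              _ ≤ A * (b / ε * x ^ p) := mul_le_mul_of_nonneg_left h11 hA.le
              _ = A * b / ε * x ^ p := by ring
          have hxp := rpow_le_const_mul_exp hx0.le hp0 hq0
          calc (n : ℝ) * A * Real.exp (-((a - c) * t ^ 2) / ((n : ℝ) + b * t ^ γ))
              ≤ (A * b / ε * x ^ p) * Real.exp (-(q * x)) :=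
                mul_le_mul hnA2 hexp1 (Real.exp_nonneg _) (by positivity)
            _ ≤ (A * b / ε * ((p / q) ^ p * Real.exp (q * x))) * Real.exp (-(q * x)) := by
                have := mul_le_mul_of_nonneg_left hxp (show (0:ℝ) ≤ A * b / ε by positivity)
                exact mul_le_mul_of_nonneg_right (by linarith [this]) (Real.exp_nonneg _)
            _ = C₂ * (Real.exp (q * x) * Real.exp (-(q * x))) := by rw [hC₂def]; ring
            _ = C₂ := by rw [← Real.exp_add, add_neg_cancel, Real.exp_zero, mul_one]
            _ ≤ C := hCC₂
        calc (n : ℝ) * (A * Real.exp (-(a * t ^ 2) / ((n : ℝ) + b * t ^ γ)))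
            = ((n : ℝ) * A * Real.exp (-((a - c) * t ^ 2) / ((n : ℝ) + b * t ^ γ))) *
              Real.exp (-(c * t ^ 2) / ((n : ℝ) + b * t ^ γ)) := by rw [hsplit]; ring
          _ ≤ C * Real.exp (-(c * t ^ 2) / ((n : ℝ) + b * t ^ γ)) :=
              mul_le_mul_of_nonneg_right hkey (Real.exp_nonneg _)
      push_neg at hbt
      -- Case 4 : the inductive bisection step
      have hεn14 : ε * (n : ℝ) ≤ 1 / 4 * (n : ℝ) :=
        mul_le_mul_of_nonneg_right hε14 (by linarith)
      have hεn2 : 2 < ε * (n : ℝ) := by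
        have h2ε : (2:ℝ) / ε ≤ (N₀ : ℝ) := by rw [hN₀def]; exact Nat.le_ceil _
        have hNn : (N₀ : ℝ) < (n : ℝ) := by exact_mod_cast hnN
        calc (2:ℝ) = ε * (2 / ε) := by field_simp
          _ ≤ ε * (N₀ : ℝ) := mul_le_mul_of_nonneg_left h2ε hε0.le
          _ < ε * (n : ℝ) := mul_lt_mul_of_pos_left hNn hε0
      obtain ⟨l, hldef⟩ : ∃ zzz : ℕ, zzz = ⌊ε * (n : ℝ)⌋₊ := ⟨_, rfl⟩
      have hl1 : 1 ≤ l := by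
        rw [hldef]
        exact Nat.le_floor (by push_cast; linarith)
      have hlle : (l : ℝ) ≤ ε * (n : ℝ) := by
        rw [hldef]; exact Nat.floor_le (by positivity)
      have hlge : ε * (n : ℝ) / 2 ≤ (l : ℝ) := by
        have hfl := Nat.lt_floor_add_one (ε * (n : ℝ))
        rw [← hldef] at hfl
        linarith
      have hln : l < n := by
        have hlr : (l : ℝ) < (n : ℝ) := by linarith [hlle, hεn14, hn1]
        exact_mod_cast hlr
      obtain ⟨h, hhdef⟩ : ∃ zzz : ℕ, zzz = n - l := ⟨_, rfl⟩
      have hh1 : 1 ≤ h := by omega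
      have hhl : h + l = n := by omega
      have hhltn : h < n := by omega
      have hhn : (h : ℝ) + (l : ℝ) = (n : ℝ) := by exact_mod_cast hhl
      have hh1' : (1:ℝ) ≤ (h : ℝ) := by exact_mod_cast hh1
      -- the three events
      have hincl : {ω | t < (Finset.Icc (m + 1) (m + n)).sup'
              (Finset.nonempty_Icc.mpr (by omega))
              (fun j => (∑ i ∈ Finset.Icc (m + 1) j, X i ω) ⊔ 0)} ⊆
          ({ω | t < (Finset.Icc (m + 1) (m + h)).sup'
              (Finset.nonempty_Icc.mpr (by omega))
              (fun j => (∑ i ∈ Finset.Icc (m + 1) j, X i ω) ⊔ 0)} ∪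
            {ω | θ * t < ∑ i ∈ Finset.Icc (m + 1) (m + h), X i ω}) ∪
          {ω | (1 - θ) * t < (Finset.Icc (m + h + 1) (m + h + l)).sup'
              (Finset.nonempty_Icc.mpr (by omega))
              (fun j => (∑ i ∈ Finset.Icc (m + h + 1) j, X i ω) ⊔ 0)} := by
        intro ω hω
        simp only [Set.mem_setOf_eq] at hω
        rw [Finset.lt_sup'_iff] at hω
        obtain ⟨j, hj, hjt⟩ := hω
        rw [Finset.mem_Icc] at hj
        have hjt' : t < ∑ i ∈ Finset.Icc (m + 1) j, X i ω := by
          rcases lt_sup_iff.mp hjt with h' | h'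
          · exact h'
          · linarith
        simp only [Set.mem_union, Set.mem_setOf_eq]
        by_cases hjh : j ≤ m + h
        · left; left
          rw [Finset.lt_sup'_iff]
          exact ⟨j, Finset.mem_Icc.mpr ⟨hj.1, hjh⟩, lt_of_lt_of_le hjt' le_sup_left⟩
        · push_neg at hjh
          have hsum : ∑ i ∈ Finset.Icc (m + 1) j, X i ω =
              (∑ i ∈ Finset.Icc (m + 1) (m + h), X i ω) +
                ∑ i ∈ Finset.Icc (m + h + 1) j, X i ω := by
            rw [show Finset.Icc (m + 1) j = Finset.Ioc m j from Finset.Icc_add_one_left_eq_Ioc m j,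
              show Finset.Icc (m + 1) (m + h) = Finset.Ioc m (m + h) from
                Finset.Icc_add_one_left_eq_Ioc m (m + h),
              show Finset.Icc (m + h + 1) j = Finset.Ioc (m + h) j from
                Finset.Icc_add_one_left_eq_Ioc (m + h) j]
            exact (Finset.sum_Ioc_consecutive _ (by omega) (by omega)).symm
          have hsplit2 : θ * t < (∑ i ∈ Finset.Icc (m + 1) (m + h), X i ω) ∨
              (1 - θ) * t < ∑ i ∈ Finset.Icc (m + h + 1) j, X i ω := by
            by_contra hcon
            push_neg at hcon
            rw [hsum] at hjt'
            have := hcon.1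
            have := hcon.2
            linarith
          rcases hsplit2 with h' | h'
          · left; right; exact h'
          · right
            rw [Finset.lt_sup'_iff]
            exact ⟨j, Finset.mem_Icc.mpr ⟨by omega, by omega⟩, lt_of_lt_of_le h' le_sup_left⟩
      have hB1 := IH h hhltn m hh1 t ht
      have hB2 := hBern m h hh1 (θ * t) (by positivity)
      have hB3 := IH l hln (m + h) hl1 ((1 - θ) * t)
        (mul_nonneg (by linarith) ht)
      -- real estimates
      have hdenh : (0:ℝ) < (h : ℝ) + b * t ^ γ := by linarith
      have hhlen : (h : ℝ) ≤ (n : ℝ) := by exact_mod_cast hhltn.le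
      have hDεn : b * t ^ γ ≤ (n : ℝ) := by linarith [hbt, hεn14, hn1]
      have h4 : (h : ℝ) + b * t ^ γ ≤ 2 * (n : ℝ) := by linarith
      have hkey1 : (1 + ε / 4) * ((h : ℝ) + b * t ^ γ) ≤ (n : ℝ) + b * t ^ γ := by
        have h5 : ε / 4 * ((h : ℝ) + b * t ^ γ) ≤ ε / 4 * (2 * (n : ℝ)) :=
          mul_le_mul_of_nonneg_left h4 (by positivity)
        linarith [h5, hlge, hhn]
      have hR1core : c * t ^ 2 / ((n : ℝ) + b * t ^ γ) + Real.log 3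
          ≤ c * t ^ 2 / ((h : ℝ) + b * t ^ γ) := by
        have hstep : c * t ^ 2 / ((n : ℝ) + b * t ^ γ) +
            (c * ε / 4) * (t ^ 2 / ((n : ℝ) + b * t ^ γ))
            ≤ c * t ^ 2 / ((h : ℝ) + b * t ^ γ) := by
          have he1 : c * t ^ 2 / ((n : ℝ) + b * t ^ γ) +
              (c * ε / 4) * (t ^ 2 / ((n : ℝ) + b * t ^ γ)) =
              (c * (1 + ε / 4) * t ^ 2) / ((n : ℝ) + b * t ^ γ) := by ring
          rw [he1, div_le_div_iff₀ hden hdenh]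
          have h6 : (0:ℝ) ≤ c * t ^ 2 := by positivity
          linarith [mul_le_mul_of_nonneg_left hkey1 h6]
        have hlog : Real.log 3 ≤ (c * ε / 4) * (t ^ 2 / ((n : ℝ) + b * t ^ γ)) := by
          calc Real.log 3 ≤ c * ε / 4 * K := hK1
            _ ≤ _ := mul_le_mul_of_nonneg_left hTK (by positivity)
        linarith
      have hR1 : C * Real.exp (-(c * t ^ 2) / ((h : ℝ) + b * t ^ γ)) ≤
          1 / 3 * (C * Real.exp (-(c * t ^ 2) / ((n : ℝ) + b * t ^ γ))) := by
        have hu : (-(c * t ^ 2)) / ((h : ℝ) + b * t ^ γ) + Real.log 3 ≤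
            (-(c * t ^ 2)) / ((n : ℝ) + b * t ^ γ) := by
          rw [neg_div, neg_div]; linarith
        have h7 := exp_le_third hu
        calc C * Real.exp (-(c * t ^ 2) / ((h : ℝ) + b * t ^ γ))
            ≤ C * (1 / 3 * Real.exp (-(c * t ^ 2) / ((n : ℝ) + b * t ^ γ))) :=
              mul_le_mul_of_nonneg_left h7 hC0.le
          _ = 1 / 3 * (C * Real.exp (-(c * t ^ 2) / ((n : ℝ) + b * t ^ γ))) := by ring
      -- middle term
      have hθt : b * (θ * t) ^ γ ≤ b * t ^ γ := by
        apply mul_le_mul_of_nonneg_left _ hb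
        exact Real.rpow_le_rpow (by positivity) (mul_le_of_le_one_left ht hθ1.le) hγ0.le
      have hdenθ : (0:ℝ) < (h : ℝ) + b * (θ * t) ^ γ := by
        have : (0:ℝ) ≤ b * (θ * t) ^ γ :=
          mul_nonneg hb (Real.rpow_nonneg (by positivity) _)
        linarith
      have hR2core : c * t ^ 2 / ((n : ℝ) + b * t ^ γ) ≤
          a * (θ * t) ^ 2 / ((h : ℝ) + b * (θ * t) ^ γ) := by
        rw [div_le_div_iff₀ hden hdenθ]
        have h8 : a * (θ * t) ^ 2 = c' * t ^ 2 := by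
          calc a * (θ * t) ^ 2 = (a * θ ^ 2) * t ^ 2 := by ring
            _ = c' * t ^ 2 := by rw [hθsq]
        rw [h8]
        have h9 : (h : ℝ) + b * (θ * t) ^ γ ≤ (n : ℝ) + b * t ^ γ := by linarith
        have h10 := mul_le_mul (mul_le_mul_of_nonneg_right hc'1.le (sq_nonneg t)) h9
          hdenθ.le (by positivity)
        linarith [h10]
      have hR2 : A * Real.exp (-(a * (θ * t) ^ 2) / ((h : ℝ) + b * (θ * t) ^ γ)) ≤
          1 / 3 * (C * Real.exp (-(c * t ^ 2) / ((n : ℝ) + b * t ^ γ))) := by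
        have hexp : Real.exp (-(a * (θ * t) ^ 2) / ((h : ℝ) + b * (θ * t) ^ γ))
            ≤ Real.exp (-(c * t ^ 2) / ((n : ℝ) + b * t ^ γ)) := by
          apply Real.exp_le_exp.mpr
          rw [neg_div, neg_div]
          linarith
        calc A * Real.exp (-(a * (θ * t) ^ 2) / ((h : ℝ) + b * (θ * t) ^ γ))
            ≤ A * Real.exp (-(c * t ^ 2) / ((n : ℝ) + b * t ^ γ)) :=
              mul_le_mul_of_nonneg_left hexp hA.le
          _ ≤ 1 / 3 * (C * Real.exp (-(c * t ^ 2) / ((n : ℝ) + b * t ^ γ))) := by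
              linarith [mul_le_mul_of_nonneg_right
                (show A ≤ 1 / 3 * C by linarith) (Real.exp_nonneg
                  (-(c * t ^ 2) / ((n : ℝ) + b * t ^ γ)))]
      -- third term
      have hθt2 : b * ((1 - θ) * t) ^ γ ≤ b * t ^ γ := by
        apply mul_le_mul_of_nonneg_left _ hb
        exact Real.rpow_le_rpow (mul_nonneg (by linarith) ht)
          (mul_le_of_le_one_left ht (by linarith)) hγ0.le
      have hdenl : (0:ℝ) < (l : ℝ) + b * ((1 - θ) * t) ^ γ := by
        have h11 : (1:ℝ) ≤ (l : ℝ) := by exact_mod_cast hl1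
        have : (0:ℝ) ≤ b * ((1 - θ) * t) ^ γ :=
          mul_nonneg hb (Real.rpow_nonneg (mul_nonneg (by linarith) ht) _)
        linarith
      have hR3core : c * t ^ 2 / ((n : ℝ) + b * t ^ γ) + Real.log 3 ≤
          c * ((1 - θ) * t) ^ 2 / ((l : ℝ) + b * ((1 - θ) * t) ^ γ) := by
        have hstep : 2 * (c * t ^ 2 / ((n : ℝ) + b * t ^ γ)) ≤
            c * ((1 - θ) * t) ^ 2 / ((l : ℝ) + b * ((1 - θ) * t) ^ γ) := by
          have he1 : 2 * (c * t ^ 2 / ((n : ℝ) + b * t ^ γ)) =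
              (2 * c * t ^ 2) / ((n : ℝ) + b * t ^ γ) := by ring
          rw [he1, div_le_div_iff₀ hden hdenl]
          have he2 : c * ((1 - θ) * t) ^ 2 = 4 * ε * (c * t ^ 2) := by
            rw [hεdef]; ring
          rw [he2]
          have h12 : (l : ℝ) + b * ((1 - θ) * t) ^ γ ≤ 2 * ε * ((n : ℝ) + b * t ^ γ) := by
            linarith [hlle, hθt2, hbt, mul_nonneg hε0.le hD0]
          linarith [mul_le_mul_of_nonneg_left h12
            (show (0:ℝ) ≤ 2 * (c * t ^ 2) by positivity)]
        have hlog : Real.log 3 ≤ c * t ^ 2 / ((n : ℝ) + b * t ^ γ) := by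
          calc Real.log 3 ≤ c * K := hK2
            _ ≤ c * (t ^ 2 / ((n : ℝ) + b * t ^ γ)) :=
              mul_le_mul_of_nonneg_left hTK hc.le
            _ = c * t ^ 2 / ((n : ℝ) + b * t ^ γ) := by ring
        linarith
      have hR3 : C * Real.exp (-(c * ((1 - θ) * t) ^ 2) / ((l : ℝ) + b * ((1 - θ) * t) ^ γ))
          ≤ 1 / 3 * (C * Real.exp (-(c * t ^ 2) / ((n : ℝ) + b * t ^ γ))) := by
        have hu : (-(c * ((1 - θ) * t) ^ 2)) / ((l : ℝ) + b * ((1 - θ) * t) ^ γ) +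
            Real.log 3 ≤ (-(c * t ^ 2)) / ((n : ℝ) + b * t ^ γ) := by
          rw [neg_div, neg_div]; linarith
        have h7 := exp_le_third hu
        calc C * Real.exp (-(c * ((1 - θ) * t) ^ 2) / ((l : ℝ) + b * ((1 - θ) * t) ^ γ))
            ≤ C * (1 / 3 * Real.exp (-(c * t ^ 2) / ((n : ℝ) + b * t ^ γ))) :=
              mul_le_mul_of_nonneg_left h7 hC0.le
          _ = 1 / 3 * (C * Real.exp (-(c * t ^ 2) / ((n : ℝ) + b * t ^ γ))) := by ring
      -- assemble
      refine le_trans (measure_mono hincl) ?_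
      refine le_trans (le_trans (measure_union_le _ _)
        (add_le_add_left (measure_union_le _ _) _)) ?_
      refine le_trans (add_le_add (add_le_add hB1 hB2) hB3) ?_
      refine le_trans (add_le_add (add_le_add
        (ENNReal.ofReal_le_ofReal hR1) (ENNReal.ofReal_le_ofReal hR2))
        (ENNReal.ofReal_le_ofReal hR3)) ?_
      rw [← ENNReal.ofReal_add (by positivity) (by positivity),
        ← ENNReal.ofReal_add (by positivity) (by positivity)]
      apply ENNReal.ofReal_le_ofReal
      have : (0:ℝ) ≤ C * Real.exp (-(c * t ^ 2) / ((n : ℝ) + b * t ^ γ)) := by positivity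
      linarith
  intro m n hn t ht
  exact main n m hn t ht
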